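/- Let n ≥ 3 and let H_{n-1} be the (n-1)-variable harmonic mean, H_{n-1}(y) = (n-1)/(y_1⁻¹ + ⋯ + y_{n-1}⁻¹). For any tuple X : Fin n → ℝ of positive reals, the iteration X⁰ = X, X^{k+1}_i = H_{n-1}(X^k with i-th coordinate deleted) converges coordinatewise, and each coordinate sequence converges to the n-variable harmonic mean n/(X_1⁻¹ + ⋯ + X_n⁻¹). -/
import Mathlib


open Filter Topology

/-- For `n = m + 1 ≥ 3`, the deletion iteration associated to the `(n-1)`-variable
harmonic mean converges in every coordinate to the `n`-variable harmonic mean. -/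
theorem deletion_iteration_harm_mean
    (m : ℕ) (hm : 2 ≤ m)
    (X : Fin (m + 1) → ℝ) (hX : ∀ i, 0 < X i)
    (Y : ℕ → Fin (m + 1) → ℝ) (hY0 : Y 0 = X)
    (hYrec : ∀ k (i : Fin (m + 1)),
      Y (k + 1) i = (m : ℝ) / (∑ j : Fin m, (Y k (i.succAbove j))⁻¹)) :
    ∀ i, Tendsto (fun k => Y k i) atTop
      (𝓝 (((m : ℝ) + 1) / (∑ j, (X j)⁻¹))) := by
  have hm0 : (0:ℝ) < (m:ℝ) := by
    have : (0:ℕ) < m := by omega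
    exact_mod_cast this
  have hm0' : (m:ℝ) ≠ 0 := hm0.ne'
  have hm1 : ((m:ℝ) + 1) ≠ 0 := by positivity
  set S := ∑ j, (X j)⁻¹ with hSdef
  have hS : 0 < S := Finset.sum_pos (fun j _ => inv_pos.mpr (hX j)) Finset.univ_nonempty
  -- positivity of all iterates
  have hpos : ∀ k i, 0 < Y k i := by
    intro k
    induction k with
    | zero => intro i; rw [hY0]; exact hX i
    | succ k ih =>
      intro i
      rw [hYrec k i]
      have : 0 < ∑ j : Fin m, (Y k (i.succAbove j))⁻¹ := by
        apply Finset.sum_pos (fun j _ => inv_pos.mpr (ih _))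
        exact Finset.univ_nonempty_iff.mpr ⟨⟨0, by omega⟩⟩
      positivity
  -- key: inverse recursion
  have hinvrec : ∀ k i, (Y (k+1) i)⁻¹ = ((∑ j, (Y k j)⁻¹) - (Y k i)⁻¹) / m := by
    intro k i
    rw [hYrec k i, inv_div]
    congr 1
    have := Fin.sum_univ_succAbove (fun j => (Y k j)⁻¹) i
    rw [this]; ring
  -- the sum of inverses is invariant
  have hsum : ∀ k, ∑ j, (Y k j)⁻¹ = S := by
    intro k
    induction k with
    | zero => rw [hY0]
    | succ k ih =>
      have : ∑ j, (Y (k+1) j)⁻¹ = ∑ j, ((∑ j', (Y k j')⁻¹) - (Y k j)⁻¹) / m := by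
        exact Finset.sum_congr rfl fun j _ => hinvrec k j
      rw [this]
      rw [← Finset.sum_div, Finset.sum_sub_distrib, ih, Finset.sum_const,
        Finset.card_univ, Fintype.card_fin]
      field_simp
      ring
  -- explicit formula for deviation from fixed point
  have hform : ∀ k i, (Y k i)⁻¹ - S / (m + 1) = (-(1/(m:ℝ)))^k * ((X i)⁻¹ - S / (m+1)) := by
    intro k
    induction k with
    | zero => intro i; simp [hY0]
    | succ k ih =>
      intro i
      rw [hinvrec k i, hsum k, pow_succ, mul_comm ((-(1/(m:ℝ)))^k), mul_assoc, ← ih i]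
      field_simp
      ring
  intro i
  -- convergence of inverses
  have hZ : Tendsto (fun k => (Y k i)⁻¹) atTop (𝓝 (S / (m+1))) := by
    have habs : |(-(1/(m:ℝ)))| < 1 := by
      rw [abs_neg, abs_of_pos (by positivity)]
      rw [div_lt_one hm0]
      exact_mod_cast by omega
    have hgeo : Tendsto (fun k => (-(1/(m:ℝ)))^k * ((X i)⁻¹ - S / (m+1))) atTop (𝓝 0) := by
      have := (tendsto_pow_atTop_nhds_zero_of_abs_lt_one habs).mul_const ((X i)⁻¹ - S / (m+1))
      simpa using this
    have : Tendsto (fun k => (Y k i)⁻¹ - S / (m+1)) atTop (𝓝 0) := by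
      simpa only [hform] using hgeo
    have := this.add_const (S / (m+1))
    simpa using this
  have hlim : (S / ((m:ℝ)+1)) ≠ 0 := by positivity
  have := hZ.inv₀ hlim
  have heq : ∀ k, ((Y k i)⁻¹)⁻¹ = Y k i := fun k => inv_inv _
  rw [inv_div] at this
  simpa only [heq] using this
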